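/- The ratio C(αn, ℓ)/C(n, 2ℓ) is a decreasing function of ℓ for 1 ≤ ℓ ≤ αn with α ≤ 1/4, and satisfies C(αn, ℓ)/C(n, 2ℓ) ≤ 2^{O(ℓ)} · (ℓ/n)^ℓ. -/

import Mathlib

private lemma ratio_step (n m ℓ : ℕ) (hn : 4 * m ≤ n) (h : ℓ + 1 ≤ m) :
    (m.choose (ℓ+1) : ℝ) / (n.choose (2*(ℓ+1))) ≤ (m.choose ℓ : ℝ) / (n.choose (2*ℓ)) := by
  have hd1 : 0 < (n.choose (2*ℓ) : ℝ) := by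
    exact_mod_cast Nat.choose_pos (by omega)
  have hd2 : 0 < (n.choose (2*(ℓ+1)) : ℝ) := by
    exact_mod_cast Nat.choose_pos (by omega)
  rw [div_le_div_iff₀ hd2 hd1]
  have key : m.choose (ℓ+1) * n.choose (2*ℓ) ≤ m.choose ℓ * n.choose (2*(ℓ+1)) := by
    have e1 : m.choose (ℓ+1) * (ℓ+1) = m.choose ℓ * (m - ℓ) := Nat.choose_succ_right_eq m ℓ
    have e2 : n.choose (2*ℓ+1) * (2*ℓ+1) = n.choose (2*ℓ) * (n - 2*ℓ) :=
      Nat.choose_succ_right_eq n (2*ℓ)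
    have e3 : n.choose (2*ℓ+2) * (2*ℓ+2) = n.choose (2*ℓ+1) * (n - (2*ℓ+1)) :=
      Nat.choose_succ_right_eq n (2*ℓ+1)
    obtain ⟨a, ha⟩ : ∃ a, m = ℓ + 1 + a := ⟨m - (ℓ+1), by omega⟩
    obtain ⟨d, hd⟩ : ∃ d, n = 4*m + d := ⟨n - 4*m, by omega⟩
    have hma : m - ℓ = a + 1 := by omega
    have hn1 : n - 2*ℓ = 2*ℓ + 4*a + 4 + d := by omega
    have hn2 : n - (2*ℓ+1) = 2*ℓ + 4*a + 3 + d := by omega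
    have arith : (m - ℓ) * ((2*ℓ+1)*(2*ℓ+2)) ≤ (n - 2*ℓ) * ((n - (2*ℓ+1)) * (ℓ+1)) := by
      rw [hma, hn1, hn2]
      calc (a+1) * ((2*ℓ+1)*(2*ℓ+2))
          = ((2*(a+1)) * (2*ℓ+1)) * (ℓ+1) := by ring
        _ ≤ ((2*ℓ+4*a+4+d) * (2*ℓ+4*a+3+d)) * (ℓ+1) :=
            Nat.mul_le_mul_right _ (Nat.mul_le_mul (by omega) (by omega))
        _ = (2*ℓ+4*a+4+d) * ((2*ℓ+4*a+3+d) * (ℓ+1)) := by ring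
    have hpos : 0 < (ℓ+1)*((2*ℓ+1)*(2*ℓ+2)) := by positivity
    refine Nat.le_of_mul_le_mul_right ?_ hpos
    calc m.choose (ℓ+1) * n.choose (2*ℓ) * ((ℓ+1)*((2*ℓ+1)*(2*ℓ+2)))
        = (m.choose (ℓ+1) * (ℓ+1)) * (n.choose (2*ℓ) * ((2*ℓ+1)*(2*ℓ+2))) := by ring
      _ = (m.choose ℓ * n.choose (2*ℓ)) * ((m - ℓ) * ((2*ℓ+1)*(2*ℓ+2))) := by rw [e1]; ring
      _ ≤ (m.choose ℓ * n.choose (2*ℓ)) * ((n - 2*ℓ) * ((n - (2*ℓ+1)) * (ℓ+1))) :=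
          Nat.mul_le_mul_left _ arith
      _ = ((n.choose (2*ℓ) * (n - 2*ℓ)) * (n - (2*ℓ+1))) * (m.choose ℓ * (ℓ+1)) := by ring
      _ = ((n.choose (2*ℓ+1) * (2*ℓ+1)) * (n - (2*ℓ+1))) * (m.choose ℓ * (ℓ+1)) := by rw [e2]
      _ = ((n.choose (2*ℓ+1) * (n - (2*ℓ+1))) * (2*ℓ+1)) * (m.choose ℓ * (ℓ+1)) := by ring
      _ = ((n.choose (2*ℓ+2) * (2*ℓ+2)) * (2*ℓ+1)) * (m.choose ℓ * (ℓ+1)) := by rw [e3]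
      _ = m.choose ℓ * n.choose (2*(ℓ+1)) * ((ℓ+1)*((2*ℓ+1)*(2*ℓ+2))) := by
          have h22 : 2*(ℓ+1) = 2*ℓ+2 := by ring
          rw [h22]; ring
  exact_mod_cast key

private lemma bound_nat (n m ℓ : ℕ) (hn : 4 * m ≤ n) (h1 : 1 ≤ ℓ) (hm : ℓ ≤ m) :
    m.choose ℓ * n ^ ℓ ≤ 2 ^ ℓ * ℓ ^ ℓ * n.choose (2*ℓ) := by
  have hnpos : 0 < n := by omega
  have hposk : 0 < Nat.factorial ℓ * n ^ ℓ :=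
    Nat.mul_pos (Nat.factorial_pos ℓ) (Nat.pow_pos hnpos)
  refine Nat.le_of_mul_le_mul_right ?_ hposk
  have A : m.choose ℓ * Nat.factorial ℓ ≤ m ^ ℓ := by
    have hA := Nat.descFactorial_eq_factorial_mul_choose m ℓ
    calc m.choose ℓ * Nat.factorial ℓ = m.descFactorial ℓ := by rw [hA]; ring
      _ ≤ m ^ ℓ := Nat.descFactorial_le_pow m ℓ
  have B : (n + 1 - 2*ℓ) ^ (2*ℓ) ≤ n.choose (2*ℓ) * Nat.factorial (2*ℓ) := by
    calc (n + 1 - 2*ℓ) ^ (2*ℓ) ≤ n.descFactorial (2*ℓ) := Nat.pow_sub_le_descFactorial n (2*ℓ)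
      _ = Nat.factorial (2*ℓ) * n.choose (2*ℓ) := Nat.descFactorial_eq_factorial_mul_choose n (2*ℓ)
      _ = n.choose (2*ℓ) * Nat.factorial (2*ℓ) := Nat.mul_comm _ _
  have C : Nat.factorial (2*ℓ) ≤ (2*ℓ) ^ ℓ * Nat.factorial ℓ := by
    have hle : ℓ ≤ 2*ℓ := by omega
    have hC := Nat.factorial_mul_descFactorial hle
    have h2 : 2*ℓ - ℓ = ℓ := by omega
    rw [h2] at hC
    calc Nat.factorial (2*ℓ) = Nat.factorial ℓ * (2*ℓ).descFactorial ℓ := hC.symm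
      _ ≤ Nat.factorial ℓ * (2*ℓ) ^ ℓ :=
          Nat.mul_le_mul_left _ (Nat.descFactorial_le_pow (2*ℓ) ℓ)
      _ = (2*ℓ) ^ ℓ * Nat.factorial ℓ := Nat.mul_comm _ _
  have D : n ^ (2*ℓ) ≤ 4 ^ ℓ * (n + 1 - 2*ℓ) ^ (2*ℓ) := by
    have hle : n ≤ 2 * (n + 1 - 2*ℓ) := by omega
    calc n ^ (2*ℓ) ≤ (2 * (n + 1 - 2*ℓ)) ^ (2*ℓ) := Nat.pow_le_pow_left hle (2*ℓ)
      _ = 2 ^ (2*ℓ) * (n + 1 - 2*ℓ) ^ (2*ℓ) := Nat.mul_pow 2 _ (2*ℓ)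
      _ = 4 ^ ℓ * (n + 1 - 2*ℓ) ^ (2*ℓ) := by rw [Nat.pow_mul]
  calc m.choose ℓ * n ^ ℓ * (Nat.factorial ℓ * n ^ ℓ)
      = (m.choose ℓ * Nat.factorial ℓ) * n ^ (2*ℓ) := by rw [two_mul, pow_add]; ring
    _ ≤ m ^ ℓ * (4 ^ ℓ * (n + 1 - 2*ℓ) ^ (2*ℓ)) := Nat.mul_le_mul A D
    _ = (m ^ ℓ * 4 ^ ℓ) * (n + 1 - 2*ℓ) ^ (2*ℓ) := by ring
    _ ≤ (m ^ ℓ * 4 ^ ℓ) * (n.choose (2*ℓ) * Nat.factorial (2*ℓ)) := Nat.mul_le_mul_left _ B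
    _ ≤ (m ^ ℓ * 4 ^ ℓ) * (n.choose (2*ℓ) * ((2*ℓ) ^ ℓ * Nat.factorial ℓ)) :=
        Nat.mul_le_mul_left _ (Nat.mul_le_mul_left _ C)
    _ = (4 * m * (2*ℓ)) ^ ℓ * (n.choose (2*ℓ) * Nat.factorial ℓ) := by
        rw [mul_pow, mul_pow]; ring
    _ ≤ (n * (2*ℓ)) ^ ℓ * (n.choose (2*ℓ) * Nat.factorial ℓ) := by
        refine Nat.mul_le_mul_right _ (Nat.pow_le_pow_left ?_ ℓ)
        exact Nat.mul_le_mul_right _ hn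
    _ = 2 ^ ℓ * ℓ ^ ℓ * n.choose (2*ℓ) * (Nat.factorial ℓ * n ^ ℓ) := by
        rw [mul_pow, mul_pow]; ring

/-- For `m = αn` with `α ≤ 1/4`, the ratio `C(m,ℓ)/C(n,2ℓ)` is decreasing in `ℓ`
on `1 ≤ ℓ ≤ m`, and is at most `2^{cℓ} (ℓ/n)^ℓ` for a constant `c`. -/
theorem binom_ratio_decreasing_and_bound :
    ∃ c : ℝ, ∀ (n m : ℕ), 0 < n → 4 * m ≤ n →
      (∀ ℓ₁ ℓ₂ : ℕ, 1 ≤ ℓ₁ → ℓ₁ ≤ ℓ₂ → ℓ₂ ≤ m →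
        (m.choose ℓ₂ : ℝ) / (n.choose (2 * ℓ₂)) ≤
          (m.choose ℓ₁ : ℝ) / (n.choose (2 * ℓ₁))) ∧
      ∀ ℓ : ℕ, 1 ≤ ℓ → ℓ ≤ m →
        (m.choose ℓ : ℝ) / (n.choose (2 * ℓ)) ≤
          (2 : ℝ) ^ (c * ℓ) * ((ℓ : ℝ) / n) ^ ℓ := by
  refine ⟨1, fun n m hn0 hn ↦ ⟨?_, ?_⟩⟩
  · intro ℓ₁ ℓ₂ h1 h12 h2m
    induction ℓ₂, h12 using Nat.le_induction with
    | base => exact le_rfl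
    | succ k hk ih =>
      calc (m.choose (k+1) : ℝ) / (n.choose (2*(k+1)))
          ≤ (m.choose k : ℝ) / (n.choose (2*k)) := ratio_step n m k hn h2m
        _ ≤ (m.choose ℓ₁ : ℝ) / (n.choose (2*ℓ₁)) := ih (by omega)
  · intro ℓ h1 hm
    have hd : 0 < (n.choose (2*ℓ) : ℝ) := by
      exact_mod_cast Nat.choose_pos (by omega)
    have hnR : (0:ℝ) < n := by exact_mod_cast hn0
    have hrw : (2:ℝ) ^ ((1:ℝ) * ℓ) = (2:ℝ) ^ ℓ := by
      rw [one_mul, Real.rpow_natCast]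
    rw [hrw, div_pow, ← mul_div_assoc, div_le_div_iff₀ hd (by positivity)]
    have key := bound_nat n m ℓ hn h1 hm
    exact_mod_cast key
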